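/- Let k be a positive integer. For all integers n ≥ 2 and j ≥ 2, p^k(n, j) ≤ p^k(n+1, j+1); moreover, if n < 2^k · j, then p^k(n, j) = p^k(n+1, j+1). -/

import Mathlib

/-- `powerPartitions k n j` is the number of partitions of `n` into exactly `j` parts,
each of which is a `k`-th power of a positive integer (partitions counted as multisets). -/
noncomputable def powerPartitions (k n j : ℕ) : ℕ :=
  Nat.card {s : Multiset ℕ //
    Multiset.card s = j ∧ (∀ x ∈ s, ∃ a : ℕ, 0 < a ∧ x = a ^ k) ∧ s.sum = n}

lemma pp_finite (k n j : ℕ) : Finite {s : Multiset ℕ //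
    Multiset.card s = j ∧ (∀ x ∈ s, ∃ a : ℕ, 0 < a ∧ x = a ^ k) ∧ s.sum = n} := by
  have : Function.Injective (fun s : {s : Multiset ℕ //
      Multiset.card s = j ∧ (∀ x ∈ s, ∃ a : ℕ, 0 < a ∧ x = a ^ k) ∧ s.sum = n} =>
      (⟨s.1, fun {i} hi => by
        obtain ⟨a, ha, rfl⟩ := s.2.2.1 i hi
        exact Nat.pow_pos ha, s.2.2.2⟩ : Nat.Partition n)) := by
    intro s t h
    exact Subtype.ext (congrArg Nat.Partition.parts h)
  exact Finite.of_injective _ this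

/-- for `n, j ≥ 2`, `p^k(n, j) ≤ p^k(n+1, j+1)`, with equality whenever
`n < 2^k · j`. -/
theorem stmt_4 (k : ℕ) (hk : 0 < k) (n j : ℕ) (hn : 2 ≤ n) (hj : 2 ≤ j) :
    powerPartitions k n j ≤ powerPartitions k (n + 1) (j + 1) ∧
      (n < 2 ^ k * j → powerPartitions k n j = powerPartitions k (n + 1) (j + 1)) := by
  have fin1 := pp_finite k n j
  have fin2 := pp_finite k (n+1) (j+1)
  set T1 := {s : Multiset ℕ //
    Multiset.card s = j ∧ (∀ x ∈ s, ∃ a : ℕ, 0 < a ∧ x = a ^ k) ∧ s.sum = n}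
  set T2 := {s : Multiset ℕ //
    Multiset.card s = (j+1) ∧ (∀ x ∈ s, ∃ a : ℕ, 0 < a ∧ x = a ^ k) ∧ s.sum = (n+1)}
  have hf : ∀ s : T1, Multiset.card (1 ::ₘ s.1) = j + 1 ∧
      (∀ x ∈ (1 ::ₘ s.1), ∃ a : ℕ, 0 < a ∧ x = a ^ k) ∧ (1 ::ₘ s.1).sum = n + 1 := by
    rintro ⟨s, hc, hp, hs⟩
    refine ⟨by simp [hc], ?_, by simp [hs, Nat.add_comm]⟩
    intro x hx
    rcases Multiset.mem_cons.1 hx with rfl | hx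
    · exact ⟨1, one_pos, (one_pow k).symm⟩
    · exact hp x hx
  let f : T1 → T2 := fun s => ⟨1 ::ₘ s.1, hf s⟩
  have hinj : Function.Injective f := by
    intro s t h
    apply Subtype.ext
    have : (1 : ℕ) ::ₘ s.1 = 1 ::ₘ t.1 := congrArg Subtype.val h
    exact (Multiset.cons_inj_right 1).1 this
  constructor
  · exact Nat.card_le_card_of_injective f hinj
  · intro hlt
    refine Nat.card_eq_of_bijective f ⟨hinj, ?_⟩
    rintro ⟨t, hc, hp, hs⟩
    have h1 : (1 : ℕ) ∈ t := by
      by_contra h1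
      have hge : ∀ x ∈ t, 2 ^ k ≤ x := by
        intro x hx
        obtain ⟨a, ha, rfl⟩ := hp x hx
        have ha2 : 2 ≤ a := by
          by_contra h
          have : a = 1 := by omega
          subst this
          exact h1 (by simpa using hx)
        exact Nat.pow_le_pow_left ha2 k
      have := Multiset.card_nsmul_le_sum hge
      rw [hc, hs] at this
      have h2 : 2 ^ k * (j + 1) ≤ n + 1 := by simpa [smul_eq_mul, mul_comm] using this
      have : 1 ≤ 2 ^ k := Nat.one_le_two_pow
      nlinarith
    refine ⟨⟨t.erase 1, ?_, ?_, ?_⟩, ?_⟩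
    · rw [Multiset.card_erase_of_mem h1, hc]; rfl
    · intro x hx; exact hp x (Multiset.mem_of_mem_erase hx)
    · have ht := Multiset.cons_erase h1
      have : t.sum = 1 + (t.erase 1).sum := by
        conv_lhs => rw [← ht]
        simp
      omega
    · apply Subtype.ext
      show 1 ::ₘ t.erase 1 = t
      exact Multiset.cons_erase h1
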